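/- Let W' be a symmetric d×d real matrix with eigenvalues σ'₁,…,σ'_d and orthonormal eigenvectors v'₁,…,v'_d, and let 0 < k < d. The unique minimizer W of the quantum relative entropy D(W‖W') = tr(W(log W - log W')) over the set {W ⪰ 0, ‖W‖₂ ≤ 1/(d-k), tr W = 1} has the same eigenvectors as W', with eigenvalues σᵢ = min(1/(d-k), σ'ᵢ/Z) for the unique constant Z > 0 such that Σᵢ σᵢ = 1. -/

import Mathlib

open Matrix

/-- Matrix logarithm of a Hermitian matrix, via the spectral decomposition
(junk value `0` on non-Hermitian matrices). -/
noncomputable def matLog {d : ℕ} (A : Matrix (Fin d) (Fin d) ℝ) :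
    Matrix (Fin d) (Fin d) ℝ :=
  if hA : A.IsHermitian then
    (hA.eigenvectorUnitary : Matrix (Fin d) (Fin d) ℝ) *
      Matrix.diagonal (fun i => Real.log (hA.eigenvalues i)) *
      star (hA.eigenvectorUnitary : Matrix (Fin d) (Fin d) ℝ)
  else 0

/-- Quantum relative entropy `D(W‖W') = tr (W (log W - log W'))`. -/
noncomputable def quantumRelEnt {d : ℕ} (W W' : Matrix (Fin d) (Fin d) ℝ) : ℝ :=
  (W * (matLog W - matLog W')).trace

/-- The Warmuth–Kuzmin feasible set: `W ⪰ 0`, spectral norm at most `1/(d-k)`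
(expressed as `(1/(d-k))·I - W ⪰ 0`), and `tr W = 1`. -/
def feasWK (d k : ℕ) : Set (Matrix (Fin d) (Fin d) ℝ) :=
  {W | W.PosSemidef ∧
    ((1 / ((d : ℝ) - (k : ℝ))) • (1 : Matrix (Fin d) (Fin d) ℝ) - W).PosSemidef ∧
    W.trace = 1}

/-! ### Auxiliary lemmas -/

lemma wkStarReal {d : ℕ} (A : Matrix (Fin d) (Fin d) ℝ) : star A = Aᵀ := by
  ext i j; simp [Matrix.star_apply]

lemma wkConjT {d : ℕ} (A : Matrix (Fin d) (Fin d) ℝ) : Aᴴ = Aᵀ := by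
  rw [← Matrix.star_eq_conjTranspose, wkStarReal]

lemma wkHerm {d : ℕ} (V : Matrix (Fin d) (Fin d) ℝ) (a : Fin d → ℝ) :
    (V * Matrix.diagonal a * Vᵀ).IsHermitian := by
  unfold Matrix.IsHermitian
  rw [wkConjT]
  simp [Matrix.transpose_mul, Matrix.mul_assoc]

lemma wkSpecFun {d : ℕ} {U V : Matrix (Fin d) (Fin d) ℝ}
    (hU : U * Uᵀ = 1) (hV : V * Vᵀ = 1) {a b : Fin d → ℝ}
    (h : U * Matrix.diagonal a * Uᵀ = V * Matrix.diagonal b * Vᵀ) (f : ℝ → ℝ) :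
    U * Matrix.diagonal (fun i => f (a i)) * Uᵀ = V * Matrix.diagonal (fun i => f (b i)) * Vᵀ := by
  have hU' : Uᵀ * U = 1 := mul_eq_one_comm.mp hU
  have hV' : Vᵀ * V = 1 := mul_eq_one_comm.mp hV
  have key : ∀ (g : ℝ → ℝ), Matrix.diagonal (fun i => g (a i)) * (Uᵀ * V)
      = (Uᵀ * V) * Matrix.diagonal (fun i => g (b i)) := by
    have hP : Matrix.diagonal a * (Uᵀ * V) = (Uᵀ * V) * Matrix.diagonal b := by
      calc Matrix.diagonal a * (Uᵀ * V)
          = Uᵀ * (U * Matrix.diagonal a * Uᵀ) * V := by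
            simp only [Matrix.mul_assoc, ← Matrix.mul_assoc Uᵀ U, hU', Matrix.one_mul]
        _ = Uᵀ * (V * Matrix.diagonal b * Vᵀ) * V := by rw [h]
        _ = (Uᵀ * V) * Matrix.diagonal b * (Vᵀ * V) := by simp only [Matrix.mul_assoc]
        _ = (Uᵀ * V) * Matrix.diagonal b := by rw [hV', Matrix.mul_one]
    intro g
    ext i j
    have h1 := congrFun (congrFun hP i) j
    simp only [Matrix.diagonal_mul, Matrix.mul_diagonal] at h1 ⊢
    rcases eq_or_ne ((Uᵀ * V) i j) 0 with h0 | h0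
    · simp [h0]
    · have hab : a i = b j := by
        rw [mul_comm (a i)] at h1
        exact mul_left_cancel₀ h0 h1
      rw [hab, mul_comm]
  have := key f
  calc U * Matrix.diagonal (fun i => f (a i)) * Uᵀ
      = U * (Matrix.diagonal (fun i => f (a i)) * (Uᵀ * V)) * Vᵀ := by
        simp only [Matrix.mul_assoc, hV, Matrix.mul_one]
    _ = V * Matrix.diagonal (fun i => f (b i)) * Vᵀ := by
        rw [this]
        simp only [← Matrix.mul_assoc, hU, Matrix.one_mul]

lemma wkUnitary {d : ℕ} {A : Matrix (Fin d) (Fin d) ℝ} (hA : A.IsHermitian) :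
    (hA.eigenvectorUnitary : Matrix (Fin d) (Fin d) ℝ) *
      (hA.eigenvectorUnitary : Matrix (Fin d) (Fin d) ℝ)ᵀ = 1 := by
  have h := (Matrix.mem_unitaryGroup_iff).mp hA.eigenvectorUnitary.2
  rwa [wkStarReal] at h

lemma wkSpectral {d : ℕ} {A : Matrix (Fin d) (Fin d) ℝ} (hA : A.IsHermitian) :
    A = (hA.eigenvectorUnitary : Matrix (Fin d) (Fin d) ℝ) *
      Matrix.diagonal hA.eigenvalues *
      (hA.eigenvectorUnitary : Matrix (Fin d) (Fin d) ℝ)ᵀ := by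
  have h := hA.spectral_theorem
  rw [Unitary.conjStarAlgAut_apply, wkStarReal] at h
  exact h

lemma wkMatLog {d : ℕ} {V : Matrix (Fin d) (Fin d) ℝ} (hV : V * Vᵀ = 1) (a : Fin d → ℝ) :
    matLog (V * Matrix.diagonal a * Vᵀ) =
      V * Matrix.diagonal (fun i => Real.log (a i)) * Vᵀ := by
  have hA := wkHerm V a
  have hspec := (wkSpectral hA).symm
  have key := wkSpecFun (wkUnitary hA) hV hspec Real.log
  rw [matLog, dif_pos hA, wkStarReal]
  exact key

lemma wkTraceDiag {d : ℕ} (a b : Fin d → ℝ) (P : Matrix (Fin d) (Fin d) ℝ) :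
    (Matrix.diagonal a * P * Matrix.diagonal b * Pᵀ).trace
      = ∑ i, ∑ j, a i * b j * (P i j)^2 := by
  have h1 : Matrix.diagonal a * P * Matrix.diagonal b
      = Matrix.of (fun i x => a i * P i x * b x) := by
    ext i x
    simp only [Matrix.mul_diagonal, Matrix.diagonal_mul, Matrix.of_apply]
  rw [h1]
  simp only [Matrix.trace, Matrix.diag, Matrix.mul_apply, Matrix.of_apply,
    Matrix.transpose_apply]
  refine Finset.sum_congr rfl fun i _ => Finset.sum_congr rfl fun j _ => by ring

lemma wkTrace2 {d : ℕ} {V U : Matrix (Fin d) (Fin d) ℝ}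
    (hV : V * Vᵀ = 1) (hU : U * Uᵀ = 1) (a b : Fin d → ℝ) :
    ((V * Matrix.diagonal a * Vᵀ) * (U * Matrix.diagonal b * Uᵀ)).trace
      = ∑ i, ∑ j, a i * b j * ((Vᵀ * U) i j)^2 := by
  have hV' : Vᵀ * V = 1 := mul_eq_one_comm.mp hV
  have hPt : (Vᵀ * U)ᵀ * Vᵀ = Uᵀ := by
    rw [Matrix.transpose_mul, Matrix.transpose_transpose, Matrix.mul_assoc, hV,
      Matrix.mul_one]
  have hexp : (V * Matrix.diagonal a * Vᵀ) * (U * Matrix.diagonal b * Uᵀ)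
      = V * (Matrix.diagonal a * (Vᵀ * U) * Matrix.diagonal b * (Vᵀ * U)ᵀ) * Vᵀ := by
    rw [← hPt]
    simp only [Matrix.mul_assoc]
  rw [hexp, Matrix.trace_mul_cycle, ← Matrix.mul_assoc, hV', Matrix.one_mul, wkTraceDiag]

lemma wkTrace1 {d : ℕ} {V : Matrix (Fin d) (Fin d) ℝ} (hV : V * Vᵀ = 1) (a : Fin d → ℝ) :
    (V * Matrix.diagonal a * Vᵀ).trace = ∑ i, a i := by
  have hV' : Vᵀ * V = 1 := mul_eq_one_comm.mp hV
  rw [Matrix.trace_mul_cycle, hV', Matrix.one_mul, Matrix.trace_diagonal]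

lemma wkRowSum {d : ℕ} {P : Matrix (Fin d) (Fin d) ℝ} (h : P * Pᵀ = 1) (i : Fin d) :
    ∑ j, (P i j)^2 = 1 := by
  have := congrFun (congrFun h i) i
  rw [Matrix.mul_apply] at this
  simp only [Matrix.transpose_apply, Matrix.one_apply_eq] at this
  rw [← this]
  exact Finset.sum_congr rfl fun j _ => sq (P i j)

lemma wkTrace2same {d : ℕ} {V : Matrix (Fin d) (Fin d) ℝ} (hV : V * Vᵀ = 1) (a b : Fin d → ℝ) :
    ((V * Matrix.diagonal a * Vᵀ) * (V * Matrix.diagonal b * Vᵀ)).trace = ∑ i, a i * b i := by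
  have hV' : Vᵀ * V = 1 := mul_eq_one_comm.mp hV
  rw [wkTrace2 hV hV a b, hV']
  refine Finset.sum_congr rfl fun i _ => ?_
  rw [Finset.sum_eq_single i]
  · simp [Matrix.one_apply_eq]
  · intro j _ hj
    simp [Matrix.one_apply, Ne.symm hj]
  · intro h; exact absurd (Finset.mem_univ i) h

lemma wkConjPSD {d : ℕ} {V : Matrix (Fin d) (Fin d) ℝ} (a : Fin d → ℝ)
    (ha : ∀ i, 0 ≤ a i) : (V * Matrix.diagonal a * Vᵀ).PosSemidef := by
  have h := (Matrix.posSemidef_diagonal_iff.mpr ha).mul_mul_conjTranspose_same V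
  rwa [wkConjT] at h

lemma wkSmulOne {d : ℕ} {V : Matrix (Fin d) (Fin d) ℝ} (hV : V * Vᵀ = 1) (c : ℝ) :
    c • (1 : Matrix (Fin d) (Fin d) ℝ) = V * Matrix.diagonal (fun _ => c) * Vᵀ := by
  rw [← Matrix.smul_one_eq_diagonal]
  rw [Matrix.mul_smul, Matrix.mul_one, Matrix.smul_mul, hV]

lemma wkEigLe {d : ℕ} {M U : Matrix (Fin d) (Fin d) ℝ} {c : ℝ} {μ : Fin d → ℝ}
    (hX : (c • (1 : Matrix (Fin d) (Fin d) ℝ) - M).PosSemidef)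
    (hU : U * Uᵀ = 1) (hM : M = U * Matrix.diagonal μ * Uᵀ) : ∀ i, μ i ≤ c := by
  have hU' : Uᵀ * U = 1 := mul_eq_one_comm.mp hU
  have hconj := hX.mul_mul_conjTranspose_same Uᵀ
  rw [wkConjT, Matrix.transpose_transpose] at hconj
  have hkey : Uᵀ * (c • (1 : Matrix (Fin d) (Fin d) ℝ) - M) * U
      = Matrix.diagonal (fun i => c - μ i) := by
    rw [Matrix.mul_sub, Matrix.sub_mul, hM]
    have h1 : Uᵀ * (c • (1 : Matrix (Fin d) (Fin d) ℝ)) * U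
        = c • (1 : Matrix (Fin d) (Fin d) ℝ) := by
      rw [Matrix.mul_smul, Matrix.mul_one, Matrix.smul_mul, hU']
    have h2 : Uᵀ * (U * Matrix.diagonal μ * Uᵀ) * U = Matrix.diagonal μ := by
      calc Uᵀ * (U * Matrix.diagonal μ * Uᵀ) * U
          = (Uᵀ * U) * Matrix.diagonal μ * (Uᵀ * U) := by simp only [Matrix.mul_assoc]
        _ = Matrix.diagonal μ := by rw [hU', Matrix.one_mul, Matrix.mul_one]
    rw [h1, h2, Matrix.smul_one_eq_diagonal, Matrix.diagonal_sub]
  rw [hkey] at hconj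
  intro i
  have := Matrix.posSemidef_diagonal_iff.mp hconj i
  linarith

lemma wkKleinLt {x y : ℝ} (hx : 0 ≤ x) (hy : 0 < y) (hxy : x ≠ y) :
    x - y < x * Real.log x - x * Real.log y := by
  rcases hx.eq_or_lt with h | h
  · rw [← h]
    simp only [Real.log_zero, zero_mul, mul_zero, sub_zero, zero_sub, sub_zero]
    linarith
  · have hyx : y / x ≠ 1 := by
      intro hcon
      apply hxy
      field_simp at hcon
      linarith
    have hlog := Real.log_lt_sub_one_of_pos (div_pos hy h) hyx
    rw [Real.log_div (ne_of_gt hy) (ne_of_gt h)] at hlog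
    have := mul_lt_mul_of_pos_left hlog h
    have hxy' : x * (y / x) = y := by field_simp
    nlinarith

lemma wkKleinLe {x y : ℝ} (hx : 0 ≤ x) (hy : 0 < y) :
    x - y ≤ x * Real.log x - x * Real.log y := by
  rcases eq_or_ne x y with h | h
  · subst h; simp
  · exact (wkKleinLt hx hy h).le

lemma wkZ (d k : ℕ) (hk : 0 < k) (hkd : k < d) (σ' : Fin d → ℝ) (hσ : ∀ i, 0 < σ' i) :
    ∃ Z : ℝ, 0 < Z ∧ (∑ i, min (1 / ((d : ℝ) - (k : ℝ))) (σ' i / Z)) = 1 ∧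
      ∀ Z' : ℝ, 0 < Z' → (∑ i, min (1 / ((d : ℝ) - (k : ℝ))) (σ' i / Z')) = 1 → Z' = Z := by
  set c : ℝ := 1 / ((d : ℝ) - (k : ℝ)) with hc_def
  have hdk : (0:ℝ) < (d : ℝ) - (k : ℝ) := by
    have : (k:ℝ) < (d:ℝ) := by exact_mod_cast hkd
    linarith
  have hc : 0 < c := by positivity
  have hd0 : 0 < d := lt_trans hk hkd
  have : Nonempty (Fin d) := ⟨⟨0, hd0⟩⟩
  set f : ℝ → ℝ := fun Z => ∑ i, min c (σ' i / Z) with hf_def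
  have hdc : 1 < (d:ℝ) * c := by
    rw [hc_def, mul_one_div]
    rw [lt_div_iff₀ hdk]
    have : (0:ℝ) < (k:ℝ) := by exact_mod_cast hk
    linarith
  have hanti : ∀ x y : ℝ, 0 < x → x ≤ y → f y ≤ f x := by
    intro x y hx hxy
    refine Finset.sum_le_sum fun i _ => min_le_min le_rfl ?_
    exact div_le_div_of_nonneg_left (hσ i).le hx hxy
  have hstrict : ∀ x y : ℝ, 0 < x → x < y → (∃ i, σ' i / y < c) → f y < f x := by
    intro x y hx hxy ⟨i₀, hi₀⟩
    refine Finset.sum_lt_sum (fun i _ => min_le_min le_rfl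
      (div_le_div_of_nonneg_left (hσ i).le hx hxy.le)) ⟨i₀, Finset.mem_univ _, ?_⟩
    have h1 : min c (σ' i₀ / y) = σ' i₀ / y := min_eq_right hi₀.le
    rw [h1]
    exact lt_min hi₀ (div_lt_div_of_pos_left (hσ i₀) hx hxy)
  have hex : ∀ y : ℝ, 0 < y → f y = 1 → ∃ i, σ' i / y < c := by
    intro y hy hfy
    by_contra hno
    push_neg at hno
    have : f y = (d:ℝ) * c := by
      rw [hf_def]
      simp only
      rw [Finset.sum_congr rfl fun i _ => min_eq_left (hno i)]
      simp [mul_comm]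
    rw [hfy] at this
    linarith
  set m : ℝ := Finset.univ.inf' (Finset.univ_nonempty) σ' with hm_def
  have hm : 0 < m := by
    obtain ⟨i, _, hi⟩ := Finset.exists_mem_eq_inf' (Finset.univ_nonempty) σ'
    rw [hm_def, hi]; exact hσ i
  set Zs : ℝ := m / c with hZs_def
  have hZs : 0 < Zs := div_pos hm hc
  have hfZs : f Zs = (d:ℝ) * c := by
    rw [hf_def]; simp only
    rw [Finset.sum_congr rfl fun i _ => min_eq_left ?_]
    · simp [mul_comm]
    · rw [hZs_def, div_div_eq_mul_div, le_div_iff₀ hm]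
      have : m ≤ σ' i := Finset.inf'_le _ (Finset.mem_univ i)
      nlinarith
  set S : ℝ := ∑ i, σ' i with hS_def
  have hS : 0 < S := Finset.sum_pos (fun i _ => hσ i) Finset.univ_nonempty
  set Zb : ℝ := 2 * S with hZb_def
  have hZb : 0 < Zb := by positivity
  have hfZb : f Zb ≤ 1/2 := by
    have : f Zb ≤ ∑ i, σ' i / Zb :=
      Finset.sum_le_sum fun i _ => min_le_right _ _
    rw [← Finset.sum_div, ← hS_def, hZb_def] at this
    calc f Zb ≤ S / (2 * S) := this
      _ = 1/2 := by
        rw [div_eq_iff (by positivity : (2:ℝ)*S ≠ 0)]; ring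
  have hsb : Zs ≤ Zb := by
    by_contra hlt
    push_neg at hlt
    have := hanti Zb Zs hZb hlt.le
    rw [hfZs] at this
    linarith
  have hcont : ContinuousOn f (Set.Icc Zs Zb) := by
    apply continuousOn_finset_sum
    intro i _
    exact continuousOn_const.inf' (continuousOn_const.div continuousOn_id
      fun x hx => ne_of_gt (lt_of_lt_of_le hZs hx.1))
  have h1mem : (1:ℝ) ∈ Set.Icc (f Zb) (f Zs) := by
    constructor
    · linarith
    · rw [hfZs]; linarith
  obtain ⟨Z, hZmem, hZ1⟩ := intermediate_value_Icc' hsb hcont h1mem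
  have hZpos : 0 < Z := lt_of_lt_of_le hZs hZmem.1
  refine ⟨Z, hZpos, hZ1, ?_⟩
  intro Z' hZ' hZ'1
  rcases lt_trichotomy Z' Z with h | h | h
  · exfalso
    have h2 : f Z' = 1 := hZ'1
    have := hstrict Z' Z hZ' h (hex Z hZpos hZ1)
    rw [hZ1, h2] at this
    linarith
  · exact h
  · exfalso
    have h2 : f Z' = 1 := hZ'1
    have := hstrict Z Z' hZpos h (hex Z' hZ' h2)
    rw [hZ1, h2] at this
    linarith

lemma wkMain {d : ℕ} (c Z : ℝ) (hc : 0 < c) (hZ : 0 < Z)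
    (σ' μ : Fin d → ℝ) (hσ' : ∀ i, 0 < σ' i)
    (P : Matrix (Fin d) (Fin d) ℝ)
    (hProw : ∀ i, ∑ j, (P i j)^2 = 1) (hPcol : ∀ j, ∑ i, (P i j)^2 = 1)
    (hμ0 : ∀ i, 0 ≤ μ i) (hμc : ∀ i, μ i ≤ c) (hμ1 : ∑ i, μ i = 1)
    (hσ1 : ∑ i, min c (σ' i / Z) = 1)
    (hne : ∃ i j, P i j ≠ 0 ∧ μ i ≠ min c (σ' j / Z)) :
    (∑ i, (min c (σ' i / Z)) * Real.log (min c (σ' i / Z)))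
      - ∑ i, (min c (σ' i / Z)) * Real.log (σ' i)
      < (∑ i, μ i * Real.log (μ i)) - ∑ i, ∑ j, μ i * Real.log (σ' j) * (P i j)^2 := by
  set σ : Fin d → ℝ := fun i => min c (σ' i / Z) with hσ_def
  have hσ0 : ∀ i, 0 < σ i := fun i => lt_min hc (div_pos (hσ' i) hZ)
  have hσc : ∀ i, σ i ≤ c := fun i => min_le_left _ _
  set m : Fin d → ℝ := fun j => ∑ i, (P i j)^2 * μ i with hm_def
  have hmc : ∀ j, m j ≤ c := by
    intro j
    calc m j ≤ ∑ i, (P i j)^2 * c :=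
          Finset.sum_le_sum fun i _ => mul_le_mul_of_nonneg_left (hμc i) (sq_nonneg _)
      _ = c := by rw [← Finset.sum_mul, hPcol j, one_mul]
  have hm1 : ∑ j, m j = 1 := by
    rw [hm_def]
    rw [Finset.sum_comm]
    calc ∑ i, ∑ j, (P i j)^2 * μ i = ∑ i, μ i := by
          refine Finset.sum_congr rfl fun i _ => ?_
          rw [← Finset.sum_mul, hProw i, one_mul]
      _ = 1 := hμ1
  set A : ℝ := ∑ i, ∑ j, (P i j)^2 * (μ i * Real.log (μ i) - μ i * Real.log (σ j)) with hA_def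
  set B : ℝ := ∑ j, (m j - σ j) * (Real.log (σ j) - Real.log (σ' j)) with hB_def
  have hsum0 : ∑ j, (m j - σ j) = 0 := by
    rw [Finset.sum_sub_distrib, hm1, hσ1, sub_self]
  have hB_nonneg : 0 ≤ B := by
    have hterm : ∀ j, 0 ≤ (m j - σ j) * (Real.log (σ j) - Real.log (σ' j) + Real.log Z) := by
      intro j
      rcases le_or_gt (σ' j / Z) c with hle | hlt
      · have h1 : σ j = σ' j / Z := min_eq_right hle
        have h2 : Real.log (σ j) - Real.log (σ' j) + Real.log Z = 0 := by
          rw [h1, Real.log_div (ne_of_gt (hσ' j)) (ne_of_gt hZ)]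
          ring
        rw [h2, mul_zero]
      · have h1 : σ j = c := min_eq_left hlt.le
        have h2 : Real.log (σ j) - Real.log (σ' j) + Real.log Z ≤ 0 := by
          rw [h1]
          have := Real.log_lt_log hc hlt
          rw [Real.log_div (ne_of_gt (hσ' j)) (ne_of_gt hZ)] at this
          linarith
        have h3 : m j - σ j ≤ 0 := by rw [h1]; linarith [hmc j]
        nlinarith [h3, h2]
    have hB_eq : B = ∑ j, (m j - σ j) * (Real.log (σ j) - Real.log (σ' j) + Real.log Z)
        - Real.log Z * ∑ j, (m j - σ j) := by
      rw [Finset.mul_sum, ← Finset.sum_sub_distrib]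
      exact Finset.sum_congr rfl fun j _ => by ring
    rw [hB_eq, hsum0, mul_zero, sub_zero]
    exact Finset.sum_nonneg fun j _ => hterm j
  have hA_pos : 0 < A := by
    have hlow : ∑ i, ∑ j, (P i j)^2 * (μ i - σ j) = 0 := by
      have e1 : ∑ i, ∑ j, (P i j)^2 * (μ i - σ j)
          = (∑ i, ∑ j, (P i j)^2 * μ i) - ∑ i, ∑ j, (P i j)^2 * σ j := by
        rw [← Finset.sum_sub_distrib]
        refine Finset.sum_congr rfl fun i _ => ?_
        rw [← Finset.sum_sub_distrib]
        exact Finset.sum_congr rfl fun j _ => by ring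
      have e2 : ∑ i, ∑ j, (P i j)^2 * μ i = 1 := by
        calc ∑ i, ∑ j, (P i j)^2 * μ i = ∑ i, μ i := by
              refine Finset.sum_congr rfl fun i _ => ?_
              rw [← Finset.sum_mul, hProw i, one_mul]
          _ = 1 := hμ1
      have e3 : ∑ i, ∑ j, (P i j)^2 * σ j = 1 := by
        rw [Finset.sum_comm]
        calc ∑ j, ∑ i, (P i j)^2 * σ j = ∑ j, σ j := by
              refine Finset.sum_congr rfl fun j _ => ?_
              rw [← Finset.sum_mul, hPcol j, one_mul]
          _ = 1 := hσ1
      rw [e1, e2, e3, sub_self]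
    obtain ⟨i₀, j₀, hP0, hμσ⟩ := hne
    have hstep : ∑ i, ∑ j, (P i j)^2 * (μ i - σ j) < A := by
      rw [hA_def, ← Finset.sum_product', ← Finset.sum_product']
      refine Finset.sum_lt_sum (fun p _ => mul_le_mul_of_nonneg_left
        (wkKleinLe (hμ0 p.1) (hσ0 p.2)) (sq_nonneg _))
        ⟨(i₀, j₀), Finset.mem_univ _, ?_⟩
      exact mul_lt_mul_of_pos_left (wkKleinLt (hμ0 i₀) (hσ0 j₀) hμσ)
        (pow_two_pos_of_ne_zero hP0)
    rw [hlow] at hstep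
    exact hstep
  have hA_eq : A = (∑ i, μ i * Real.log (μ i)) - ∑ j, m j * Real.log (σ j) := by
    have e1 : A = (∑ i, ∑ j, (P i j)^2 * (μ i * Real.log (μ i)))
        - ∑ i, ∑ j, (P i j)^2 * (μ i * Real.log (σ j)) := by
      rw [hA_def, ← Finset.sum_sub_distrib]
      refine Finset.sum_congr rfl fun i _ => ?_
      rw [← Finset.sum_sub_distrib]
      exact Finset.sum_congr rfl fun j _ => by ring
    have e2 : ∑ i, ∑ j, (P i j)^2 * (μ i * Real.log (μ i)) = ∑ i, μ i * Real.log (μ i) := by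
      refine Finset.sum_congr rfl fun i _ => ?_
      rw [← Finset.sum_mul, hProw i, one_mul]
    have e3 : ∑ i, ∑ j, (P i j)^2 * (μ i * Real.log (σ j)) = ∑ j, m j * Real.log (σ j) := by
      rw [Finset.sum_comm]
      refine Finset.sum_congr rfl fun j _ => ?_
      rw [hm_def, Finset.sum_mul]
      exact Finset.sum_congr rfl fun i _ => by ring
    rw [e1, e2, e3]
  have hB_eq2 : B = (∑ j, m j * Real.log (σ j)) - (∑ j, m j * Real.log (σ' j))
      - (∑ j, σ j * Real.log (σ j)) + ∑ j, σ j * Real.log (σ' j) := by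
    rw [hB_def]
    rw [show (∑ j, m j * Real.log (σ j)) - (∑ j, m j * Real.log (σ' j))
      - (∑ j, σ j * Real.log (σ j)) + ∑ j, σ j * Real.log (σ' j)
      = ∑ j, (m j * Real.log (σ j) - m j * Real.log (σ' j)
          - σ j * Real.log (σ j) + σ j * Real.log (σ' j)) by
        rw [Finset.sum_add_distrib, Finset.sum_sub_distrib, Finset.sum_sub_distrib]]
    exact Finset.sum_congr rfl fun j _ => by ring
  have hD : ∑ i, ∑ j, μ i * Real.log (σ' j) * (P i j)^2 = ∑ j, m j * Real.log (σ' j) := by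
    rw [Finset.sum_comm]
    refine Finset.sum_congr rfl fun j _ => ?_
    rw [hm_def, Finset.sum_mul]
    exact Finset.sum_congr rfl fun i _ => by ring
  rw [hD]
  linarith [hA_pos, hB_nonneg, hA_eq, hB_eq2]

/-- The relative-entropy projection of a positive definite symmetric matrix
`W' = V diag(σ') Vᵀ` onto the Warmuth–Kuzmin feasible set has the same eigenvectors,
with eigenvalues `min(1/(d-k), σ'ᵢ/Z)` for a unique normalizing constant `Z > 0`. -/
theorem stmt9 (d k : ℕ) (hk : 0 < k) (hkd : k < d)
    (V : Matrix (Fin d) (Fin d) ℝ) (hV : V * Vᵀ = 1)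
    (σ' : Fin d → ℝ) (hσ : ∀ i, 0 < σ' i) :
    ∃ Z : ℝ, 0 < Z ∧
      (∑ i, min (1 / ((d : ℝ) - (k : ℝ))) (σ' i / Z)) = 1 ∧
      (∀ Z' : ℝ, 0 < Z' →
        (∑ i, min (1 / ((d : ℝ) - (k : ℝ))) (σ' i / Z')) = 1 → Z' = Z) ∧
      (V * Matrix.diagonal (fun i => min (1 / ((d : ℝ) - (k : ℝ))) (σ' i / Z)) * Vᵀ)
        ∈ feasWK d k ∧
      ∀ M ∈ feasWK d k,
        M ≠ V * Matrix.diagonal (fun i => min (1 / ((d : ℝ) - (k : ℝ))) (σ' i / Z)) * Vᵀ →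
        quantumRelEnt
            (V * Matrix.diagonal (fun i => min (1 / ((d : ℝ) - (k : ℝ))) (σ' i / Z)) * Vᵀ)
            (V * Matrix.diagonal σ' * Vᵀ)
          < quantumRelEnt M (V * Matrix.diagonal σ' * Vᵀ) := by
  obtain ⟨Z, hZpos, hZ1, hZuniq⟩ := wkZ d k hk hkd σ' hσ
  set c : ℝ := 1 / ((d : ℝ) - (k : ℝ)) with hc_def
  have hdk : (0:ℝ) < (d : ℝ) - (k : ℝ) := by
    have : (k:ℝ) < (d:ℝ) := by exact_mod_cast hkd
    linarith
  have hc : 0 < c := by positivity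
  set σ : Fin d → ℝ := fun i => min c (σ' i / Z) with hσ_def
  have hσ0 : ∀ i, 0 < σ i := fun i => lt_min hc (div_pos (hσ i) hZpos)
  have hσc : ∀ i, σ i ≤ c := fun i => min_le_left _ _
  set W : Matrix (Fin d) (Fin d) ℝ := V * Matrix.diagonal σ * Vᵀ with hW_def
  -- feasibility
  have hfeas : W ∈ feasWK d k := by
    refine ⟨wkConjPSD σ (fun i => (hσ0 i).le), ?_, ?_⟩
    · have heq : c • (1 : Matrix (Fin d) (Fin d) ℝ) - W
          = V * Matrix.diagonal (fun i => c - σ i) * Vᵀ := by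
        rw [wkSmulOne hV c, hW_def, ← Matrix.sub_mul, ← Matrix.mul_sub, Matrix.diagonal_sub]
      rw [← hc_def, heq]
      exact wkConjPSD _ (fun i => by linarith [hσc i])
    · rw [hW_def, wkTrace1 hV σ]
      exact hZ1
  refine ⟨Z, hZpos, hZ1, hZuniq, hfeas, ?_⟩
  intro M hM hMne
  obtain ⟨hMpsd, hMle, hMtr⟩ := hM
  have hH : M.IsHermitian := hMpsd.1
  set U : Matrix (Fin d) (Fin d) ℝ := (hH.eigenvectorUnitary : Matrix (Fin d) (Fin d) ℝ)
    with hU_def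
  set μ : Fin d → ℝ := hH.eigenvalues with hμ_def
  have hU : U * Uᵀ = 1 := wkUnitary hH
  have hU' : Uᵀ * U = 1 := mul_eq_one_comm.mp hU
  have hV' : Vᵀ * V = 1 := mul_eq_one_comm.mp hV
  have hMspec : M = U * Matrix.diagonal μ * Uᵀ := wkSpectral hH
  have hμ0 : ∀ i, 0 ≤ μ i := fun i => hMpsd.eigenvalues_nonneg i
  have hμc : ∀ i, μ i ≤ c := wkEigLe hMle hU hMspec
  have hμ1 : ∑ i, μ i = 1 := by
    have h := hMtr
    rw [hMspec, wkTrace1 hU] at h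
    exact h
  set P : Matrix (Fin d) (Fin d) ℝ := Uᵀ * V with hP_def
  have hPPt : P * Pᵀ = 1 := by
    rw [hP_def, Matrix.transpose_mul, Matrix.transpose_transpose]
    calc Uᵀ * V * (Vᵀ * U) = Uᵀ * (V * Vᵀ) * U := by simp only [Matrix.mul_assoc]
      _ = 1 := by rw [hV, Matrix.mul_one, hU']
  have hPtP : Pᵀ * P = 1 := mul_eq_one_comm.mp hPPt
  have hProw : ∀ i, ∑ j, (P i j)^2 = 1 := wkRowSum hPPt
  have hPcol : ∀ j, ∑ i, (P i j)^2 = 1 := by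
    intro j
    have := wkRowSum (by rwa [Matrix.transpose_transpose] : Pᵀ * Pᵀᵀ = 1) j
    simpa [Matrix.transpose_apply] using this
  -- M ≠ W gives witness
  have hne : ∃ i j, P i j ≠ 0 ∧ μ i ≠ σ j := by
    by_contra hno
    push_neg at hno
    apply hMne
    have hcomm : Matrix.diagonal μ * P = P * Matrix.diagonal σ := by
      ext i j
      simp only [Matrix.diagonal_mul, Matrix.mul_diagonal]
      rcases eq_or_ne (P i j) 0 with h0 | h0
      · simp [h0]
      · rw [hno i j h0, mul_comm]
    have hUP : U * P = V := by
      rw [hP_def, ← Matrix.mul_assoc, hU, Matrix.one_mul]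
    have hPVt : P * Vᵀ = Uᵀ := by
      rw [hP_def, Matrix.mul_assoc, hV, Matrix.mul_one]
    calc M = U * Matrix.diagonal μ * Uᵀ := hMspec
      _ = U * (Matrix.diagonal μ * P) * Vᵀ := by
          rw [← hPVt]; simp only [Matrix.mul_assoc]
      _ = (U * P) * Matrix.diagonal σ * Vᵀ := by
          rw [hcomm]; simp only [Matrix.mul_assoc]
      _ = V * Matrix.diagonal σ * Vᵀ := by rw [hUP]
  -- compute both relative entropies
  have hlogW : matLog W = V * Matrix.diagonal (fun i => Real.log (σ i)) * Vᵀ :=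
    wkMatLog hV σ
  have hlogW' : matLog (V * Matrix.diagonal σ' * Vᵀ)
      = V * Matrix.diagonal (fun i => Real.log (σ' i)) * Vᵀ := wkMatLog hV σ'
  have hlogM : matLog M = U * Matrix.diagonal (fun i => Real.log (μ i)) * Uᵀ := by
    rw [hMspec]; exact wkMatLog hU μ
  have hLHS : quantumRelEnt W (V * Matrix.diagonal σ' * Vᵀ)
      = (∑ i, σ i * Real.log (σ i)) - ∑ i, σ i * Real.log (σ' i) := by
    rw [quantumRelEnt, Matrix.mul_sub, Matrix.trace_sub, hlogW, hlogW', hW_def,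
      wkTrace2same hV σ (fun i => Real.log (σ i)),
      wkTrace2same hV σ (fun i => Real.log (σ' i))]
  have hRHS : quantumRelEnt M (V * Matrix.diagonal σ' * Vᵀ)
      = (∑ i, μ i * Real.log (μ i)) - ∑ i, ∑ j, μ i * Real.log (σ' j) * (P i j)^2 := by
    rw [quantumRelEnt, Matrix.mul_sub, Matrix.trace_sub, hlogM, hlogW']
    rw [hMspec, wkTrace2same hU μ (fun i => Real.log (μ i)),
      wkTrace2 hU hV μ (fun i => Real.log (σ' i))]
  rw [hLHS, hRHS]
  exact wkMain c Z hc hZpos σ' μ hσ P hProw hPcol hμ0 hμc hμ1 hZ1 hne
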